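/- Let n, P, Y be integers with 0 < P < n and Y = n − P, and let μ be a real number with log n ≤ μ ≤ Y. Then the probability, over a uniformly random permutation of the n items, that there exists a set of ⌈4nμ/P⌉ consecutive positions all of which are occupied by yellow items, is at most n/e^μ. Equivalently, the number of permutations of the n items for which some interval of ⌈4nμ/P⌉ consecutive positions contains only yellow items is at most n!·n/e^μ. -/

import Mathlib

open Finset

lemma fiber_bound {n : ℕ} (S : Finset (Fin n)) (f : Fin n → Fin n) :
    Fintype.card {σ : Equiv.Perm (Fin n) //
        (∀ i ∈ S, σ i = f i)} ≤ (n - S.card).factorial := by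
  classical
  by_cases hne : Nonempty {σ : Equiv.Perm (Fin n) // ∀ i ∈ S, σ i = f i}
  · obtain ⟨σ0, hσ0⟩ := hne
    set A : Finset (Fin n) := S.image f with hA
    have hAcard : A.card = S.card := by
      rw [hA, Finset.card_image_of_injOn]
      intro x hx y hy hxy
      apply σ0.injective
      rw [hσ0 x hx, hσ0 y hy, hxy]
    have hAc : (Aᶜ).card = n - S.card := by
      rw [Finset.card_compl, hAcard, Fintype.card_fin]
    have key : ∀ (σ : {σ : Equiv.Perm (Fin n) // ∀ i ∈ S, σ i = f i}) (x : ↥(Sᶜ)),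
        (σ : Equiv.Perm (Fin n)) x ∈ Aᶜ := by
      rintro ⟨σ, hσ⟩ x
      rw [Finset.mem_compl]
      intro hmem
      rw [hA, Finset.mem_image] at hmem
      obtain ⟨y, hy, hfy⟩ := hmem
      have : σ y = σ x := by rw [hσ y hy, hfy]
      have := σ.injective this
      have hx := x.2
      rw [Finset.mem_compl] at hx
      exact hx (this ▸ hy)
    have hinj : Function.Injective (fun σ : {σ : Equiv.Perm (Fin n) // ∀ i ∈ S, σ i = f i} =>
        (⟨fun x => ⟨(σ : Equiv.Perm (Fin n)) x, key σ x⟩, by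
          intro a b hab
          exact Subtype.ext ((σ : Equiv.Perm (Fin n)).injective
            (congrArg Subtype.val hab))⟩ : ↥(Sᶜ) ↪ ↥(Aᶜ))) := by
      rintro ⟨σ, hσ⟩ ⟨σ', hσ'⟩ h
      refine Subtype.ext (Equiv.ext fun x => ?_)
      by_cases hx : x ∈ S
      · rw [hσ x hx, hσ' x hx]
      · have := congrArg (fun g : ↥(Sᶜ) ↪ ↥(Aᶜ) => (g ⟨x, Finset.mem_compl.mpr hx⟩ : Fin n)) h
        exact this
    calc Fintype.card {σ : Equiv.Perm (Fin n) // ∀ i ∈ S, σ i = f i}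
        ≤ Fintype.card (↥(Sᶜ) ↪ ↥(Aᶜ)) := Fintype.card_le_of_injective _ hinj
      _ = (n - S.card).factorial := by
          rw [Fintype.card_embedding_eq, Fintype.card_coe, Fintype.card_coe, hAc,
            Finset.card_compl, Fintype.card_fin, Nat.descFactorial_self]
  · rw [Fintype.card_eq_zero_iff.mpr (not_nonempty_iff.mp hne)]
    exact Nat.zero_le _

lemma perm_count {n : ℕ} (S T : Finset (Fin n)) :
    (Finset.univ.filter (fun σ : Equiv.Perm (Fin n) => ∀ i ∈ S, σ i ∈ T)).card ≤
      T.card.descFactorial S.card * (n - S.card).factorial := by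
  classical
  have hsub : (Finset.univ.filter (fun σ : Equiv.Perm (Fin n) => ∀ i ∈ S, σ i ∈ T)) ⊆
      (Finset.univ : Finset (↥S ↪ ↥T)).biUnion (fun f =>
        Finset.univ.filter (fun σ : Equiv.Perm (Fin n) =>
          ∀ i (h : i ∈ S), σ i = (f ⟨i, h⟩ : Fin n))) := by
    intro σ hσ
    rw [Finset.mem_filter] at hσ
    rw [Finset.mem_biUnion]
    refine ⟨⟨fun x => ⟨σ x, hσ.2 x x.2⟩, fun a b hab =>
      Subtype.ext (σ.injective (congrArg Subtype.val hab))⟩, Finset.mem_univ _, ?_⟩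
    simp
    intro i h
    rfl
  calc (Finset.univ.filter (fun σ : Equiv.Perm (Fin n) => ∀ i ∈ S, σ i ∈ T)).card
      ≤ ∑ f : ↥S ↪ ↥T, (Finset.univ.filter (fun σ : Equiv.Perm (Fin n) =>
          ∀ i (h : i ∈ S), σ i = (f ⟨i, h⟩ : Fin n))).card :=
        (Finset.card_le_card hsub).trans (Finset.card_biUnion_le)
    _ ≤ ∑ _f : ↥S ↪ ↥T, (n - S.card).factorial := by
        refine Finset.sum_le_sum fun f _ => ?_
        have := fiber_bound S (fun i => if h : i ∈ S then (f ⟨i, h⟩ : Fin n) else i)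
        refine le_trans (le_of_eq ?_) this
        rw [← Fintype.card_subtype]
        refine Fintype.card_congr (Equiv.subtypeEquivRight fun σ => ?_)
        constructor
        · intro h i hi; rw [h i hi, dif_pos hi]
        · intro h i hi; rw [h i hi, dif_pos hi]
    _ = T.card.descFactorial S.card * (n - S.card).factorial := by
        rw [Finset.sum_const, Finset.card_univ, Fintype.card_embedding_eq,
          Fintype.card_coe, Fintype.card_coe, smul_eq_mul]


lemma desc_bound (n Y L : ℕ) (hYn : Y ≤ n) (hn : 0 < n) :
    (Y.descFactorial L : ℝ) ≤ ((Y : ℝ) / (n : ℝ)) ^ L * (n.descFactorial L : ℝ) := by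
  have hn' : (0:ℝ) < n := by exact_mod_cast hn
  rw [Nat.descFactorial_eq_prod_range, Nat.descFactorial_eq_prod_range]
  push_cast
  have heq : ((Y : ℝ) / n) ^ L * ∏ i ∈ Finset.range L, ((n - i : ℕ) : ℝ)
      = ∏ i ∈ Finset.range L, ((Y : ℝ) / n * ((n - i : ℕ) : ℝ)) := by
    rw [Finset.prod_mul_distrib, Finset.prod_const, Finset.card_range]
  refine le_trans (Finset.prod_le_prod (fun i _ => by positivity) (fun i hi => ?_))
    (le_of_eq heq.symm)
  by_cases hi' : i ≤ Y
  · have hin : i ≤ n := le_trans hi' hYn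
    rw [Nat.cast_sub hi', Nat.cast_sub hin, div_mul_eq_mul_div, le_div_iff₀ hn']
    have h1 : (Y : ℝ) ≤ n := by exact_mod_cast hYn
    have h2 : (0:ℝ) ≤ i := by positivity
    nlinarith
  · rw [Nat.sub_eq_zero_of_le (le_of_not_ge hi')]
    have : (0:ℝ) ≤ ((n - i : ℕ) : ℝ) := by positivity
    push_cast
    positivity


/-- There are `n` items, a fixed set `Pink` of `P` of them is pink and the
remaining `Y = n - P` are yellow. For `log n ≤ μ ≤ Y`, the number of permutations
(assignments of items to positions) for which some interval of `⌈4nμ/P⌉` consecutive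
positions contains only yellow items is at most `n! · n / e^μ`. -/
theorem stmt_0 (n P Y : ℕ) (hP : 0 < P) (hPn : P < n) (hY : Y = n - P)
    (μ : ℝ) (hμl : Real.log n ≤ μ) (hμu : μ ≤ (Y : ℝ))
    (Pink : Finset (Fin n)) (hPink : Pink.card = P) :
    (({σ : Equiv.Perm (Fin n) |
        ∃ a : ℕ, a + ⌈4 * (n : ℝ) * μ / (P : ℝ)⌉₊ ≤ n ∧
          ∀ i : Fin n, a ≤ (i : ℕ) → (i : ℕ) < a + ⌈4 * (n : ℝ) * μ / (P : ℝ)⌉₊ →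
            σ i ∉ Pink}).ncard : ℝ)
      ≤ (n.factorial : ℝ) * n / Real.exp μ := by
  classical
  set L := ⌈4 * (n : ℝ) * μ / (P : ℝ)⌉₊ with hLdef
  have hn : 0 < n := lt_trans hP hPn
  have hn' : (0:ℝ) < n := by exact_mod_cast hn
  have hP' : (0:ℝ) < P := by exact_mod_cast hP
  have hn1 : (1:ℝ) < n := by exact_mod_cast (by omega : 1 < n)
  have hμ0 : 0 < μ := lt_of_lt_of_le (Real.log_pos hn1) hμl
  have hL1 : 1 ≤ L := by
    rw [hLdef, Nat.one_le_ceil_iff]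
    positivity
  have hRHS : 0 ≤ (n.factorial : ℝ) * n / Real.exp μ := by positivity
  by_cases hLn : L ≤ n
  · -- main case
    have hcard : ({σ : Equiv.Perm (Fin n) |
        ∃ a : ℕ, a + L ≤ n ∧
          ∀ i : Fin n, a ≤ (i : ℕ) → (i : ℕ) < a + L → σ i ∉ Pink}).ncard
        = (Finset.univ.filter (fun σ : Equiv.Perm (Fin n) =>
            ∃ a : ℕ, a + L ≤ n ∧
            ∀ i : Fin n, a ≤ (i : ℕ) → (i : ℕ) < a + L → σ i ∉ Pink)).card := by
      rw [Set.ncard_eq_toFinset_card', Set.toFinset_setOf]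
    rw [hcard]
    set S : ℕ → Finset (Fin n) := fun a =>
      Finset.univ.filter (fun i : Fin n => a ≤ (i : ℕ) ∧ (i : ℕ) < a + L) with hSdef
    have hScard : ∀ a, a + L ≤ n → (S a).card = L := by
      intro a ha
      have hlt : ∀ m ∈ Finset.Ico a (a + L), m < n := by
        intro m hm; rw [Finset.mem_Ico] at hm; omega
      have : S a = (Finset.Ico a (a + L)).attachFin hlt := by
        ext i
        simp [hSdef, Finset.mem_attachFin, Finset.mem_Ico]
      rw [this, Finset.card_attachFin, Nat.card_Ico]
      omega
    have hsub : (Finset.univ.filter (fun σ : Equiv.Perm (Fin n) =>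
            ∃ a : ℕ, a + L ≤ n ∧
            ∀ i : Fin n, a ≤ (i : ℕ) → (i : ℕ) < a + L → σ i ∉ Pink)) ⊆
        (Finset.range (n - L + 1)).biUnion (fun a =>
          Finset.univ.filter (fun σ : Equiv.Perm (Fin n) => ∀ i ∈ S a, σ i ∈ Pinkᶜ)) := by
      intro σ hσ
      rw [Finset.mem_filter] at hσ
      obtain ⟨-, a, ha, hall⟩ := hσ
      rw [Finset.mem_biUnion]
      refine ⟨a, Finset.mem_range.mpr (by omega), ?_⟩
      rw [Finset.mem_filter]
      refine ⟨Finset.mem_univ _, fun i hi => ?_⟩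
      rw [hSdef] at hi
      simp only [Finset.mem_filter, Finset.mem_univ, true_and] at hi
      exact Finset.mem_compl.mpr (hall i hi.1 hi.2)
    have hbound : (Finset.univ.filter (fun σ : Equiv.Perm (Fin n) =>
            ∃ a : ℕ, a + L ≤ n ∧
            ∀ i : Fin n, a ≤ (i : ℕ) → (i : ℕ) < a + L → σ i ∉ Pink)).card
        ≤ (n - L + 1) * ((n - P).descFactorial L * (n - L).factorial) := by
      refine le_trans (Finset.card_le_card hsub) (le_trans Finset.card_biUnion_le ?_)
      have hterm : ∀ a ∈ Finset.range (n - L + 1),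
          (Finset.univ.filter (fun σ : Equiv.Perm (Fin n) => ∀ i ∈ S a, σ i ∈ Pinkᶜ)).card
          ≤ (n - P).descFactorial L * (n - L).factorial := by
        intro a ha
        rw [Finset.mem_range] at ha
        have haL : a + L ≤ n := by omega
        have := perm_count (S a) Pinkᶜ
        rwa [hScard a haL, Finset.card_compl, Fintype.card_fin, hPink] at this
      refine le_trans (Finset.sum_le_sum hterm) ?_
      rw [Finset.sum_const, Finset.card_range, smul_eq_mul]
    -- now pass to reals
    have hfact : ((n - L).factorial : ℝ) * (n.descFactorial L : ℝ) = (n.factorial : ℝ) := by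
      exact_mod_cast congrArg (Nat.cast (R := ℝ)) (Nat.factorial_mul_descFactorial hLn)
    have hA : ((n - L + 1 : ℕ) : ℝ) ≤ (n : ℝ) := by exact_mod_cast (by omega : n - L + 1 ≤ n)
    have hB : ((n - P).descFactorial L : ℝ) ≤ Real.exp (-μ) * (n.descFactorial L : ℝ) := by
      refine le_trans (desc_bound n (n - P) L (by omega) hn) ?_
      have hcast : (((n - P : ℕ)) : ℝ) = (n : ℝ) - P := by
        rw [Nat.cast_sub hPn.le]
      refine mul_le_mul_of_nonneg_right ?_ (by positivity)
      have hbase : ((n - P : ℕ) : ℝ) / n ≤ Real.exp (-(P / n)) := by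
        rw [hcast]
        have := Real.add_one_le_exp (-(P / (n:ℝ)))
        have heq : ((n:ℝ) - P) / n = -(P / (n:ℝ)) + 1 := by field_simp; ring
        rw [heq]
        exact this
      have hbase0 : (0:ℝ) ≤ ((n - P : ℕ) : ℝ) / n := by positivity
      refine le_trans (pow_le_pow_left₀ hbase0 hbase L) ?_
      rw [← Real.exp_nat_mul]
      apply Real.exp_le_exp.mpr
      -- need L * (-(P/n)) ≤ -μ, i.e. μ ≤ L * P / n
      have hceil : 4 * (n : ℝ) * μ / (P : ℝ) ≤ L := Nat.le_ceil _
      rw [div_le_iff₀ hP'] at hceil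
      have hLP : (n : ℝ) * μ ≤ L * P := by nlinarith
      rw [mul_neg, neg_le_neg_iff, ← mul_div_assoc, le_div_iff₀ hn']
      linarith
    calc ((Finset.univ.filter (fun σ : Equiv.Perm (Fin n) =>
            ∃ a : ℕ, a + L ≤ n ∧
            ∀ i : Fin n, a ≤ (i : ℕ) → (i : ℕ) < a + L → σ i ∉ Pink)).card : ℝ)
        ≤ (((n - L + 1) * ((n - P).descFactorial L * (n - L).factorial) : ℕ) : ℝ) := by
          exact_mod_cast hbound
      _ = ((n - L + 1 : ℕ) : ℝ) * (((n - P).descFactorial L : ℝ) * ((n - L).factorial : ℝ)) := by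
          push_cast; ring
      _ ≤ (n : ℝ) * ((Real.exp (-μ) * (n.descFactorial L : ℝ)) * ((n - L).factorial : ℝ)) := by
          refine mul_le_mul hA ?_ (by positivity) (by positivity)
          exact mul_le_mul_of_nonneg_right hB (by positivity)
      _ = (n.factorial : ℝ) * n / Real.exp μ := by
          rw [Real.exp_neg, ← hfact]; ring
  · -- empty case
    have hset : {σ : Equiv.Perm (Fin n) |
        ∃ a : ℕ, a + L ≤ n ∧
          ∀ i : Fin n, a ≤ (i : ℕ) → (i : ℕ) < a + L → σ i ∉ Pink} = ∅ := by
      ext σ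
      simp only [Set.mem_setOf_eq, Set.mem_empty_iff_false, iff_false, not_exists]
      intro a ha
      exact absurd ha.1 (by omega)
    rw [hset]
    simpa using hRHS
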